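/- If G is a connected graph of order n ≥ 3 and diameter D, then μ(G)^D > n/√3, where μ(G) is the largest adjacency eigenvalue of G. -/

import Mathlib

open Classical in
noncomputable def adjMat {V : Type*} [Fintype V] (G : SimpleGraph V) :
    Matrix V V ℝ :=
  Matrix.of fun i j => if G.Adj i j then 1 else 0

def IsAdjEigenvalue {V : Type*} [Fintype V] (A : Matrix V V ℝ) (μ : ℝ) : Prop :=
  ∃ x : V → ℝ, x ≠ 0 ∧ A.mulVec x = μ • x

def IsMaxAdjEigenvalue {V : Type*} [Fintype V] (A : Matrix V V ℝ) (μ : ℝ) : Prop :=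
  IsAdjEigenvalue A μ ∧ ∀ ν, IsAdjEigenvalue A ν → ν ≤ μ

def IsMinAdjEigenvalue {V : Type*} [Fintype V] (A : Matrix V V ℝ) (μ : ℝ) : Prop :=
  IsAdjEigenvalue A μ ∧ ∀ ν, IsAdjEigenvalue A ν → μ ≤ ν

open Matrix Finset in
lemma rayleigh_core {V : Type*} [Fintype V] [DecidableEq V] {A : Matrix V V ℝ}
    (hA : A.IsHermitian) {μ : ℝ} (hmax : ∀ ν, IsAdjEigenvalue A ν → ν ≤ μ)
    (y : V → ℝ) :
    y ⬝ᵥ A.mulVec y ≤ μ * (y ⬝ᵥ y) ∧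
      (y ⬝ᵥ A.mulVec y = μ * (y ⬝ᵥ y) → A.mulVec y = μ • y) := by
  set b := hA.eigenvectorBasis with hb
  set lam := hA.eigenvalues with hlam
  set c : V → ℝ := fun i => (⇑(b i)) ⬝ᵥ y with hc
  have hrepr : y = ∑ i, c i • ⇑(b i) := by
    have h := b.sum_repr' (WithLp.toLp 2 y : EuclideanSpace ℝ V)
    have h3 := congrArg (WithLp.linearEquiv 2 ℝ (V → ℝ)) h
    rw [map_sum] at h3
    simp only [LinearEquiv.map_smul, WithLp.linearEquiv_apply] at h3
    rw [show (WithLp.addEquiv 2 (V → ℝ)).toFun (WithLp.toLp 2 y : EuclideanSpace ℝ V) = y from rfl] at h3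
    rw [← h3]
    congr 1
    funext i
    congr 1
    simp only [c, PiLp.inner_apply, RCLike.inner_apply, conj_trivial, dotProduct]
    exact Finset.sum_congr rfl fun j _ => mul_comm _ _
  have heig : ∀ i, A.mulVec ⇑(b i) = lam i • ⇑(b i) := fun i => hA.mulVec_eigenvectorBasis i
  have hle : ∀ i, lam i ≤ μ := by
    intro i
    apply hmax
    refine ⟨⇑(b i), ?_, heig i⟩
    intro h0
    have h1 : ‖b i‖ = 1 := b.orthonormal.1 i
    rw [show (b i : EuclideanSpace ℝ V) = 0 by simpa using congrArg (WithLp.toLp 2) h0] at h1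
    simp at h1
  have hAy : A.mulVec y = ∑ i, (c i * lam i) • ⇑(b i) := by
    conv_lhs => rw [hrepr]
    rw [show A.mulVec (∑ i, c i • ⇑(b i)) = ∑ i, A.mulVec (c i • ⇑(b i)) from
      map_sum A.mulVecLin _ _]
    refine Finset.sum_congr rfl fun i _ => ?_
    rw [Matrix.mulVec_smul, heig i, smul_smul]
  have hcy : ∀ i, y ⬝ᵥ ⇑(b i) = c i := fun i => dotProduct_comm _ _
  have hdsum : ∀ (f : V → V → ℝ), (y ⬝ᵥ ∑ i, f i) = ∑ i, y ⬝ᵥ f i := by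
    intro f
    simp only [dotProduct, Finset.sum_apply, Finset.mul_sum]
    exact Finset.sum_comm
  have hyy : y ⬝ᵥ y = ∑ i, c i * c i := by
    nth_rewrite 2 [hrepr]
    rw [hdsum]
    exact Finset.sum_congr rfl fun i _ => by rw [dotProduct_smul, smul_eq_mul, hcy i, mul_comm]
  have hyAy : y ⬝ᵥ A.mulVec y = ∑ i, lam i * (c i * c i) := by
    rw [hAy, hdsum]
    exact Finset.sum_congr rfl fun i _ => by rw [dotProduct_smul, smul_eq_mul, hcy i]; ring
  constructor
  · rw [hyAy, hyy, Finset.mul_sum]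
    exact Finset.sum_le_sum fun i _ =>
      mul_le_mul_of_nonneg_right (hle i) (mul_self_nonneg _)
  · intro heq
    rw [hyAy, hyy, Finset.mul_sum] at heq
    have hz : ∀ i ∈ Finset.univ, (μ - lam i) * (c i * c i) = 0 := by
      rw [← Finset.sum_eq_zero_iff_of_nonneg (fun i _ =>
        mul_nonneg (sub_nonneg.2 (hle i)) (mul_self_nonneg _))]
      have h4 : ∑ i, (μ - lam i) * (c i * c i) =
          (∑ i, μ * (c i * c i)) - ∑ i, lam i * (c i * c i) := by
        rw [← Finset.sum_sub_distrib]
        exact Finset.sum_congr rfl fun i _ => by ring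
      rw [h4, ← heq]
      ring
    have hkey : ∀ i, c i * lam i = c i * μ := by
      intro i
      rcases mul_eq_zero.1 (hz i (Finset.mem_univ i)) with h | h
      · rw [sub_eq_zero] at h; rw [h]
      · rw [mul_self_eq_zero.1 h]; ring
    rw [hAy, hrepr, Finset.smul_sum]
    exact Finset.sum_congr rfl fun i _ => by rw [hkey i, smul_smul, mul_comm]

open Matrix Finset in
lemma exists_nonneg_eigvec {V : Type*} [Fintype V] [DecidableEq V] {A : Matrix V V ℝ}
    (hA : A.IsHermitian) (hApos : ∀ v w, 0 ≤ A v w) {μ : ℝ}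
    (hmax : IsMaxAdjEigenvalue A μ) :
    ∃ y : V → ℝ, y ≠ 0 ∧ (∀ v, 0 ≤ y v) ∧ A.mulVec y = μ • y := by
  obtain ⟨x, hx0, hxe⟩ := hmax.1
  set y : V → ℝ := fun v => |x v| with hy
  have hyy : y ⬝ᵥ y = x ⬝ᵥ x := by
    simp [dotProduct, y, abs_mul_abs_self]
  have hxAx : x ⬝ᵥ A.mulVec x = μ * (x ⬝ᵥ x) := by
    rw [hxe, dotProduct_smul, smul_eq_mul]
  have hge : x ⬝ᵥ A.mulVec x ≤ y ⬝ᵥ A.mulVec y := by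
    simp only [dotProduct, mulVec, Finset.mul_sum]
    refine Finset.sum_le_sum fun v _ => Finset.sum_le_sum fun w _ => ?_
    have h := le_abs_self (x v * (A v w * x w))
    rwa [abs_mul, abs_mul, abs_of_nonneg (hApos v w)] at h
  have hray := rayleigh_core hA hmax.2 y
  have heq : y ⬝ᵥ A.mulVec y = μ * (y ⬝ᵥ y) := by
    have h1 := hray.1
    rw [hyy]
    rw [hyy] at h1
    linarith [hge, hxAx]
  refine ⟨y, ?_, fun v => abs_nonneg _, hray.2 heq⟩
  intro h0
  apply hx0
  funext v
  have := congrFun h0 v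
  simpa [y, abs_eq_zero] using this

lemma walk_extend {V : Type*} {G : SimpleGraph V} (hadj : ∀ u : V, ∃ w, G.Adj u w)
    {u v : V} (p : G.Walk u v) (m : ℕ) : ∃ q : G.Walk u v, q.length = p.length + 2 * m := by
  induction m with
  | zero => exact ⟨p, by omega⟩
  | succ m ih =>
    obtain ⟨q, hq⟩ := ih
    obtain ⟨w, hw⟩ := hadj u
    exact ⟨SimpleGraph.Walk.cons hw (SimpleGraph.Walk.cons hw.symm q), by
      simp [SimpleGraph.Walk.length_cons, hq]; omega⟩

theorem stmt2 {n : ℕ} (hn : 3 ≤ n) (G : SimpleGraph (Fin n)) (hG : G.Connected)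
    (D : ℕ) (hD1 : ∀ u v, G.dist u v ≤ D) (hD2 : ∃ u v, G.dist u v = D)
    (μ : ℝ) (hmax : IsMaxAdjEigenvalue (adjMat G) μ) :
    μ ^ D > (n : ℝ) / Real.sqrt 3 := by
  classical
  have hAeq : adjMat G = G.adjMatrix ℝ := by
    ext i j
    by_cases h : G.Adj i j <;> simp [adjMat, h]
  have hherm : (G.adjMatrix ℝ).IsHermitian := by
    ext i j
    simp only [Matrix.conjTranspose_apply, SimpleGraph.adjMatrix_apply, star_trivial]
    rw [SimpleGraph.adj_comm]
  set A := G.adjMatrix ℝ with hAdef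
  rw [hAeq] at hmax
  have hApos : ∀ v w, 0 ≤ A v w := by
    intro v w
    simp only [hAdef, SimpleGraph.adjMatrix_apply]
    split_ifs <;> norm_num
  obtain ⟨y, hy0, hynn, hye⟩ := exists_nonneg_eigvec hherm hApos hmax
  -- basic vertices
  have h01 : (⟨0, by omega⟩ : Fin n) ≠ ⟨1, by omega⟩ := by
    intro h; simpa using congrArg Fin.val h
  set v0 : Fin n := ⟨0, by omega⟩
  set v1 : Fin n := ⟨1, by omega⟩
  set v2 : Fin n := ⟨2, by omega⟩
  have hDpos : 1 ≤ D := by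
    have h1 := hD1 v0 v1
    have h2 := hG.pos_dist_of_ne h01
    omega
  -- every vertex has a neighbor
  have hadj : ∀ u : Fin n, ∃ w, G.Adj u w := by
    intro u
    obtain ⟨v, hv⟩ := Fintype.exists_ne_of_one_lt_card (by simp; omega) u
    obtain ⟨p, hp⟩ := hG.exists_walk_length_eq_dist u v
    cases p with
    | nil => exact absurd rfl hv
    | cons h q => exact ⟨_, h⟩
  -- positivity of entries of powers
  have hpow_nonneg : ∀ (k : ℕ) (u v : Fin n), 0 ≤ (A ^ k) u v := by
    intro k u v
    rw [SimpleGraph.adjMatrix_pow_apply_eq_card_walk]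
    positivity
  have hpow_ge_one : ∀ (k : ℕ) (u v : Fin n), G.dist u v ≤ k → G.dist u v % 2 = k % 2 →
      1 ≤ (A ^ k) u v := by
    intro k u v hdk hpar
    obtain ⟨p, hp⟩ := hG.exists_walk_length_eq_dist u v
    obtain ⟨q, hq⟩ := walk_extend hadj p ((k - G.dist u v) / 2)
    have hqk : q.length = k := by rw [hq, hp]; omega
    rw [SimpleGraph.adjMatrix_pow_apply_eq_card_walk]
    have : Nonempty {p : G.Walk u v | p.length = k} := ⟨⟨q, hqk⟩⟩
    exact_mod_cast Nat.one_le_iff_ne_zero.mpr (Fintype.card_ne_zero)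
  -- every entry of A^(D-1) + A^D is at least 1
  have hM : ∀ u v : Fin n, 1 ≤ (A ^ (D - 1)) u v + (A ^ D) u v := by
    intro u v
    have hdD := hD1 u v
    by_cases hpar : G.dist u v % 2 = D % 2
    · have h1 := hpow_ge_one D u v hdD hpar
      have h2 := hpow_nonneg (D - 1) u v
      linarith
    · have h1 := hpow_ge_one (D - 1) u v (by omega) (by omega)
      have h2 := hpow_nonneg D u v
      linarith
  have hmv : ∀ (M : Matrix (Fin n) (Fin n) ℝ) (w : Fin n),
      (M.mulVec y) w = ∑ v, M w v * y v := by
    intro M w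
    simp [Matrix.mulVec, dotProduct]
  -- eigen equation for powers
  have hpowy : ∀ k : ℕ, (A ^ k).mulVec y = (μ ^ k) • y := by
    intro k
    induction k with
    | zero => simp [Matrix.one_mulVec]
    | succ k ih =>
      rw [pow_succ, ← Matrix.mulVec_mulVec, hye, Matrix.mulVec_smul, ih, smul_smul, pow_succ]
      rw [mul_comm]
  -- argmin
  obtain ⟨u, -, hu⟩ := Finset.exists_min_image Finset.univ y ⟨v0, Finset.mem_univ v0⟩
  have hu' : ∀ v, y u ≤ y v := fun v => hu v (Finset.mem_univ v)
  set S := ∑ v, y v with hS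
  have hSpos : 0 < S := by
    obtain ⟨w, hw⟩ := Function.ne_iff.1 hy0
    have hw' : 0 < y w := lt_of_le_of_ne (hynn w) (Ne.symm hw)
    exact lt_of_lt_of_le hw' (Finset.single_le_sum (fun v _ => hynn v) (Finset.mem_univ w))
  have hkey : S ≤ (μ ^ (D - 1) + μ ^ D) * y u := by
    have h1 : ((A ^ (D - 1) + A ^ D).mulVec y) u = (μ ^ (D - 1) + μ ^ D) * y u := by
      rw [Matrix.add_mulVec, hpowy, hpowy]
      simp [add_mul]
    rw [← h1, hmv]
    refine Finset.sum_le_sum fun v _ => ?_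
    have := mul_le_mul_of_nonneg_right (hM u v) (hynn v)
    simpa [Matrix.add_apply] using this
  have hyu : 0 < y u := by
    rcases lt_or_eq_of_le (hynn u) with h | h
    · exact h
    · exfalso; rw [← h] at hkey; simp at hkey; linarith
  have hn_le : (n : ℝ) * y u ≤ S := by
    have : ∑ _v : Fin n, y u ≤ S := Finset.sum_le_sum fun v _ => hu' v
    simpa [Finset.sum_const, Finset.card_univ, nsmul_eq_mul] using this
  have hcard : (n : ℝ) ≤ μ ^ (D - 1) + μ ^ D :=
    le_of_mul_le_mul_right (by linarith) hyu
  -- positivity of μ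
  have hypos : ∀ v, 0 < y v := fun v => lt_of_lt_of_le hyu (hu' v)
  have hmupos : 0 < μ := by
    obtain ⟨a, ha⟩ := hadj v0
    have h1 : (A.mulVec y) v0 = μ * y v0 := by rw [hye]; simp
    have h2 : y a ≤ (A.mulVec y) v0 := by
      rw [hmv]
      have h3 := Finset.single_le_sum (f := fun w => A v0 w * y w)
        (fun w _ => mul_nonneg (hApos v0 w) (hynn w)) (Finset.mem_univ a)
      have hA1 : A v0 a = 1 := by rw [hAdef]; simp [SimpleGraph.adjMatrix_apply, ha]
      simp only [hA1, one_mul] at h3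
      exact h3
    nlinarith [hypos a, hypos v0]
  -- a vertex with two distinct neighbors
  obtain ⟨b, a, c, hac, hba, hbc⟩ :
      ∃ b a c : Fin n, a ≠ c ∧ G.Adj b a ∧ G.Adj b c := by
    by_cases hD2' : 2 ≤ D
    · obtain ⟨u', v', huv⟩ := hD2
      obtain ⟨p, hp⟩ := hG.exists_walk_length_eq_dist u' v'
      rw [huv] at hp
      cases p with
      | nil => simp at hp; omega
      | cons h q =>
        cases q with
        | nil => simp at hp; omega
        | cons h2 r =>
          rename_i b' c'
          refine ⟨b', u', c', ?_, h.symm, h2⟩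
          intro hEq
          subst hEq
          have : G.dist u' v' ≤ r.length := SimpleGraph.dist_le r
          simp [SimpleGraph.Walk.length_cons] at hp
          omega
    · -- D ≤ 1 : graph is complete
      have hcomp : ∀ x y' : Fin n, x ≠ y' → G.Adj x y' := by
        intro x y' hxy
        have h1 := hD1 x y'
        have h2 := hG.pos_dist_of_ne hxy
        have : G.dist x y' = 1 := by omega
        exact SimpleGraph.dist_eq_one_iff_adj.1 this
      have h02 : v0 ≠ v2 := by intro h; simpa using congrArg Fin.val h
      have h12 : v1 ≠ v2 := by intro h; simpa [v1, v2] using congrArg Fin.val h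
      exact ⟨v1, v0, v2, h02, (hcomp v1 v0 (Ne.symm h01)), hcomp v1 v2 h12⟩
  -- μ² ≥ 2
  have hmu2 : 2 ≤ μ ^ 2 := by
    have h1 : ((A ^ 2).mulVec y) b = μ ^ 2 * y b := by rw [hpowy]; simp
    have h2 : (A ^ 2) b b * y b ≤ ((A ^ 2).mulVec y) b := by
      rw [hmv]
      exact Finset.single_le_sum (f := fun w => (A ^ 2) b w * y w)
        (fun w _ => mul_nonneg (hpow_nonneg 2 b w) (hynn w)) (Finset.mem_univ b)
    have h3 : 2 ≤ (A ^ 2) b b := by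
      rw [pow_two, Matrix.mul_apply]
      have hsub : ({a, c} : Finset (Fin n)) ⊆ Finset.univ := Finset.subset_univ _
      have hpair : ∑ k ∈ ({a, c} : Finset (Fin n)), A b k * A k b = 2 := by
        rw [Finset.sum_pair hac]
        have e1 : A b a = 1 := by rw [hAdef]; simp [SimpleGraph.adjMatrix_apply, hba]
        have e2 : A a b = 1 := by rw [hAdef]; simp [SimpleGraph.adjMatrix_apply, hba.symm]
        have e3 : A b c = 1 := by rw [hAdef]; simp [SimpleGraph.adjMatrix_apply, hbc]
        have e4 : A c b = 1 := by rw [hAdef]; simp [SimpleGraph.adjMatrix_apply, hbc.symm]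
        rw [e1, e2, e3, e4]
        norm_num
      calc (2 : ℝ) = ∑ k ∈ ({a, c} : Finset (Fin n)), A b k * A k b := hpair.symm
        _ ≤ ∑ k, A b k * A k b := Finset.sum_le_sum_of_subset_of_nonneg hsub
            (fun w _ _ => mul_nonneg (hApos b w) (hApos w b))
    nlinarith [hypos b]
  -- numerics
  set s := Real.sqrt 3 with hs
  have hs2 : s ^ 2 = 3 := Real.sq_sqrt (by norm_num)
  have hspos : 0 < s := Real.sqrt_pos.2 (by norm_num)
  have hs17 : (1.73 : ℝ) < s := by nlinarith
  have hmu14 : (1.414 : ℝ) < μ := by nlinarith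
  have hP : 0 < μ ^ (D - 1) := pow_pos hmupos _
  have hDsplit : μ ^ D = μ ^ (D - 1) * μ := by
    conv_lhs => rw [show D = (D - 1) + 1 by omega]
    rw [pow_succ]
  rw [gt_iff_lt, div_lt_iff₀ hspos]
  have hstep : 1 + μ < μ * s := by nlinarith
  calc (n : ℝ) ≤ μ ^ (D - 1) + μ ^ D := hcard
    _ = μ ^ (D - 1) * (1 + μ) := by rw [hDsplit]; ring
    _ < μ ^ (D - 1) * (μ * s) := by
        exact mul_lt_mul_of_pos_left hstep hP
    _ = μ ^ D * s := by rw [hDsplit]; ring
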